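/- arXiv:1503.01192 — 3 statements merged into one kernel-verified Lean document; each statement's English description precedes it below -/
import Mathlib

section
/- Let X be a sequence of length n and let π be a permutation of {1,...,n} that stably partitions X around a pivot value m: all elements ≤ m keep their relative order and precede all elements > m, which also keep their relative order. Then the number of inversions of X that are 'fixed' by π, namely the number of pairs (i,j) with i < j, X_i > m ≥ X_j, equals the sum over all positions p with π(p) > p of (π(p) − p), where π(p) denotes the new position of the element originally at position p. -/
/-- `π` stably partitions `X` around the pivot value `m`: small elements (`≤ m`)
keep their relative order and precede all big elements (`> m`), which also keep
their relative order. Here `π p` is the new position of the element originally at `p`. -/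
def IsStablePartition {n : ℕ} {α : Type*} [LinearOrder α]
    (X : Fin n → α) (m : α) (π : Equiv.Perm (Fin n)) : Prop :=
  (∀ p q : Fin n, p < q → X p ≤ m → X q ≤ m → π p < π q) ∧
  (∀ p q : Fin n, p < q → m < X p → m < X q → π p < π q) ∧
  (∀ p q : Fin n, X p ≤ m → m < X q → π p < π q)

theorem fixed_inversions_eq_displacement_sum {n : ℕ} {α : Type*} [LinearOrder α]
    (X : Fin n → α) (m : α) (π : Equiv.Perm (Fin n))
    (hπ : IsStablePartition X m π) :
    (Finset.univ.filter
        (fun p : Fin n × Fin n => p.1 < p.2 ∧ X p.2 ≤ m ∧ m < X p.1)).card =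
      ∑ p ∈ Finset.univ.filter (fun p : Fin n => p < π p), ((π p : ℕ) - (p : ℕ)) := by
  classical
  obtain ⟨hss, hbb, hsb⟩ := hπ
  -- position of any p is the number of q whose image is smaller
  have hcard : ∀ p : Fin n, (π p : ℕ) =
      (Finset.univ.filter fun q => π q < π p).card := by
    intro p
    have himg : Finset.Iio (π p) = (Finset.univ.filter fun q => π q < π p).image π := by
      ext r
      simp only [Finset.mem_Iio, Finset.mem_image, Finset.mem_filter, Finset.mem_univ, true_and]
      constructor
      · intro hr; exact ⟨π.symm r, by simpa using hr, by simp⟩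
      · rintro ⟨q, hq, rfl⟩; exact hq
    rw [← Fin.card_Iio (π p), himg,
      Finset.card_image_of_injective _ π.injective]
  have hp : ∀ p : Fin n, (p : ℕ) = (Finset.univ.filter fun q => q < p).card := by
    intro p
    rw [← Fin.card_Iio p]
    congr 1
    ext q; simp
  -- small elements don't move right
  have hsmall : ∀ p : Fin n, X p ≤ m → (π p : ℕ) ≤ p := by
    intro p hpm
    rw [hcard p, hp p]
    apply Finset.card_le_card
    intro q hq
    simp only [Finset.mem_filter, Finset.mem_univ, true_and] at hq ⊢
    by_contra hqp
    push_neg at hqp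
    rcases eq_or_lt_of_le hqp with rfl | hlt
    · exact absurd hq (lt_irrefl _)
    · rcases le_or_gt (X q) m with hqm | hqm
      · exact absurd (hss p q hlt hpm hqm) (not_lt.2 hq.le)
      · exact absurd (hsb p q hpm hqm) (not_lt.2 hq.le)
  -- displacement of a big element = number of small elements after it
  have hbig : ∀ p : Fin n, m < X p → (π p : ℕ) - (p : ℕ) =
      (Finset.univ.filter fun q => X q ≤ m ∧ p < q).card := by
    intro p hpm
    -- characterize which q land before π p
    have hchar : (Finset.univ.filter fun q => π q < π p) =
        Finset.univ.filter fun q => X q ≤ m ∨ (m < X q ∧ q < p) := by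
      ext q
      simp only [Finset.mem_filter, Finset.mem_univ, true_and]
      constructor
      · intro h
        rcases le_or_gt (X q) m with hqm | hqm
        · exact Or.inl hqm
        · refine Or.inr ⟨hqm, ?_⟩
          rcases lt_trichotomy q p with h1 | rfl | h1
          · exact h1
          · exact absurd h (lt_irrefl _)
          · exact absurd (hbb p q h1 hpm hqm) (not_lt.2 h.le)
      · rintro (hqm | ⟨hqm, hqp⟩)
        · exact hsb q p hqm hpm
        · exact hbb q p hqp hqm hpm
    have hπp : (π p : ℕ) = (Finset.univ.filter fun q : Fin n => X q ≤ m).card +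
        (Finset.univ.filter fun q => m < X q ∧ q < p).card := by
      have hdisj : Disjoint (Finset.univ.filter fun q : Fin n => X q ≤ m)
          (Finset.univ.filter fun q => m < X q ∧ q < p) := by
        simp only [Finset.disjoint_filter, Finset.mem_univ]
        intro q _ hqm ⟨hqm', _⟩
        exact absurd hqm' (not_lt.2 hqm)
      rw [hcard p, hchar, Finset.filter_or, Finset.card_union_of_disjoint hdisj]
    have hpsplit : (p : ℕ) = (Finset.univ.filter fun q => X q ≤ m ∧ q < p).card +
        (Finset.univ.filter fun q => m < X q ∧ q < p).card := by
      rw [hp p]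
      have := Finset.card_filter_add_card_filter_not
        (s := Finset.univ.filter fun q : Fin n => q < p) (p := fun q => X q ≤ m)
      rw [Finset.filter_filter, Finset.filter_filter] at this
      rw [← this]
      congr 1
      · congr 1; ext q; simp [and_comm]
      · congr 1; ext q; simp [and_comm, not_le]
    have hssplit : (Finset.univ.filter fun q : Fin n => X q ≤ m).card =
        (Finset.univ.filter fun q => X q ≤ m ∧ q < p).card +
        (Finset.univ.filter fun q => X q ≤ m ∧ p < q).card := by
      have := Finset.card_filter_add_card_filter_not
        (s := Finset.univ.filter fun q : Fin n => X q ≤ m) (p := fun q => q < p)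
      rw [Finset.filter_filter, Finset.filter_filter] at this
      rw [← this]
      congr 2
      ext q
      simp only [Finset.mem_filter, Finset.mem_univ, true_and, not_lt]
      constructor
      · rintro ⟨hqm, hqp⟩
        refine ⟨hqm, lt_of_le_of_ne hqp ?_⟩
        rintro rfl
        exact absurd hqm (not_le.2 hpm)
      · rintro ⟨hqm, hqp⟩; exact ⟨hqm, hqp.le⟩
    omega
  -- replace the sum's index set by the big elements
  have hsum : ∑ p ∈ Finset.univ.filter (fun p : Fin n => p < π p), ((π p : ℕ) - (p : ℕ)) =
      ∑ p ∈ Finset.univ.filter (fun p : Fin n => m < X p), ((π p : ℕ) - (p : ℕ)) := by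
    apply Finset.sum_subset
    · intro p hp'
      simp only [Finset.mem_filter, Finset.mem_univ, true_and] at hp' ⊢
      by_contra h
      push_neg at h
      have := hsmall p h
      have : (π p : ℕ) ≤ (p : ℕ) := this
      exact absurd (Fin.lt_iff_val_lt_val.1 hp') (not_lt.2 this)
    · intro p _ hp'
      simp only [Finset.mem_filter, Finset.mem_univ, true_and, not_lt] at hp'
      have : (π p : ℕ) ≤ (p : ℕ) := Fin.le_iff_val_le_val.1 hp'
      omega
  rw [hsum]
  -- count the inversion pairs fiberwise over the first coordinate
  rw [Finset.card_eq_sum_card_fiberwise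
    (f := fun x : Fin n × Fin n => x.1) (t := Finset.univ) (fun x _ => Finset.mem_univ _)]
  rw [← Finset.sum_filter_add_sum_filter_not Finset.univ (fun p : Fin n => m < X p)]
  simp only [Finset.filter_filter]
  have hzero : ∑ p ∈ Finset.univ.filter (fun p : Fin n => ¬ m < X p),
      ((Finset.univ.filter fun x : Fin n × Fin n =>
        (x.1 < x.2 ∧ X x.2 ≤ m ∧ m < X x.1) ∧ x.1 = p)).card = 0 := by
    apply Finset.sum_eq_zero
    intro p hp'
    simp only [Finset.mem_filter, Finset.mem_univ, true_and, not_lt] at hp'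
    rw [Finset.card_eq_zero]
    ext x
    simp only [Finset.mem_filter, Finset.mem_univ, true_and, Finset.notMem_empty,
      iff_false]
    rintro ⟨⟨_, _, hx⟩, rfl⟩
    exact absurd hx (not_lt.2 hp')
  rw [hzero, add_zero]
  apply Finset.sum_congr rfl
  intro p hp'
  simp only [Finset.mem_filter, Finset.mem_univ, true_and] at hp'
  rw [hbig p hp']
  -- fiber over p ↔ small elements after p
  have : (Finset.univ.filter fun x : Fin n × Fin n =>
      (x.1 < x.2 ∧ X x.2 ≤ m ∧ m < X x.1) ∧ x.1 = p) =
      (Finset.univ.filter fun q => X q ≤ m ∧ p < q).image (fun q => (p, q)) := by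
    ext x
    simp only [Finset.mem_filter, Finset.mem_univ, true_and, Finset.mem_image]
    constructor
    · rintro ⟨⟨h1, h2, _⟩, rfl⟩
      exact ⟨x.2, ⟨h2, h1⟩, rfl⟩
    · rintro ⟨q, ⟨hqm, hpq⟩, rfl⟩
      exact ⟨⟨hpq, hqm, hp'⟩, rfl⟩
  rw [this, Finset.card_image_of_injective]
  intro a b hab
  simpa using hab
end

section
/- In a stable partition of a sequence around a value m, for every element x > m (a 'big' element) at original position p, the difference π(p) − p equals the number of positions q > p whose element is ≤ m. -/
lemma perm_val_eq_card {n : ℕ} (π : Equiv.Perm (Fin n)) (p : Fin n) :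
    (π p : ℕ) = (Finset.univ.filter (fun q : Fin n => π q < π p)).card := by
  have h : (Finset.univ.filter (fun q : Fin n => π q < π p)).card
      = (Finset.univ.filter (fun i : Fin n => i < π p)).card := by
    apply Finset.card_bij (fun q _ => π q)
    · intro a ha; simp at ha ⊢; exact ha
    · intro a _ b _ h; exact π.injective h
    · intro b hb; simp at hb; exact ⟨π.symm b, by simpa using hb, by simp⟩
  rw [h]
  have : Finset.univ.filter (fun i : Fin n => i < π p) = Finset.Iio (π p) := by
    ext i; simp
  rw [this, Fin.card_Iio]

theorem big_element_displacement {n : ℕ} {α : Type*} [LinearOrder α]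
    (X : Fin n → α) (m : α) (π : Equiv.Perm (Fin n))
    (hπ : IsStablePartition X m π) (p : Fin n) (hp : m < X p) :
    (π p : ℕ) - (p : ℕ) =
      (Finset.univ.filter (fun q : Fin n => p < q ∧ X q ≤ m)).card := by
  obtain ⟨h1, h2, h3⟩ := hπ
  classical
  set A := Finset.univ.filter (fun q : Fin n => X q ≤ m) with hA
  set Alt := Finset.univ.filter (fun q : Fin n => q < p ∧ X q ≤ m) with hAlt
  set Agt := Finset.univ.filter (fun q : Fin n => p < q ∧ X q ≤ m) with hAgt
  set Blt := Finset.univ.filter (fun q : Fin n => q < p ∧ m < X q) with hBlt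
  -- Fact 1: π p = |A| + |Blt|
  have fact1 : (π p : ℕ) = A.card + Blt.card := by
    rw [perm_val_eq_card π p]
    have heq : Finset.univ.filter (fun q : Fin n => π q < π p) = A ∪ Blt := by
      ext q
      simp only [hA, hBlt, Finset.mem_union, Finset.mem_filter, Finset.mem_univ, true_and]
      constructor
      · intro hq
        rcases le_or_gt (X q) m with hs | hb
        · exact Or.inl hs
        · refine Or.inr ⟨?_, hb⟩
          rcases lt_trichotomy q p with h | h | h
          · exact h
          · subst h; exact absurd hq (lt_irrefl _)
          · exact absurd (h2 p q h hp hb) (fun h' => absurd hq (not_lt.2 (le_of_lt h')))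
      · rintro (hs | ⟨hlt, hb⟩)
        · exact h3 q p hs hp
        · exact h2 q p hlt hb hp
    have hdisj : Disjoint A Blt := by
      rw [Finset.disjoint_left]
      intro q hq hq'
      simp [hA] at hq; simp [hBlt] at hq'
      exact absurd hq (not_le.2 hq'.2)
    rw [heq, Finset.card_union_of_disjoint hdisj]
  -- Fact 2: p = |Alt| + |Blt|
  have fact2 : (p : ℕ) = Alt.card + Blt.card := by
    have : Alt ∪ Blt = Finset.Iio p := by
      ext q
      simp only [hAlt, hBlt, Finset.mem_union, Finset.mem_filter, Finset.mem_univ, true_and,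
        Finset.mem_Iio]
      constructor
      · rintro (⟨h, _⟩ | ⟨h, _⟩) <;> exact h
      · intro h
        rcases le_or_gt (X q) m with hs | hb
        · exact Or.inl ⟨h, hs⟩
        · exact Or.inr ⟨h, hb⟩
    have hdisj : Disjoint Alt Blt := by
      rw [Finset.disjoint_left]
      intro q hq hq'
      simp [hAlt] at hq; simp [hBlt] at hq'
      exact absurd hq.2 (not_le.2 hq'.2)
    rw [← Finset.card_union_of_disjoint hdisj, this, Fin.card_Iio]
  -- Fact 3: |A| = |Alt| + |Agt|
  have fact3 : A.card = Alt.card + Agt.card := by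
    have : Alt ∪ Agt = A := by
      ext q
      simp only [hAlt, hAgt, hA, Finset.mem_union, Finset.mem_filter, Finset.mem_univ, true_and]
      constructor
      · rintro (⟨_, h⟩ | ⟨_, h⟩) <;> exact h
      · intro hs
        rcases lt_trichotomy q p with h | h | h
        · exact Or.inl ⟨h, hs⟩
        · subst h; exact absurd hp (not_lt.2 hs)
        · exact Or.inr ⟨h, hs⟩
    have hdisj : Disjoint Alt Agt := by
      rw [Finset.disjoint_left]
      intro q hq hq'
      simp [hAlt] at hq; simp [hAgt] at hq'
      exact absurd hq'.1 (not_lt.2 (le_of_lt hq.1))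
    rw [← this, Finset.card_union_of_disjoint hdisj]
  omega
end

section
/- If x is inserted at the front of the concatenation L_1 ++ ... ++ L_k of pairwise-ordered blocks, and x is placed at the front of block L_j where j is the least index with max(L_j) ≥ x (or j = k if no such index exists), then the resulting full sequence has exactly Σ_{i<j} |L_i| more inversions than the concatenation without x had, plus the inversions of x within L_j, which equal |{y ∈ L_j : y < x}|. -/
/-- The number of inversions of a sequence. -/
def numInv {n : ℕ} {α : Type*} [LinearOrder α] (X : Fin n → α) : ℕ :=
  (Finset.univ.filter (fun p : Fin n × Fin n => p.1 < p.2 ∧ X p.2 < X p.1)).card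

/-- The number of inversions of a list. -/
def listInv {α : Type*} [LinearOrder α] (l : List α) : ℕ := numInv l.get

-- auxiliary lemmas
lemma numInv_cons {n : ℕ} {α : Type*} [LinearOrder α] (a : α) (f : Fin n → α) :
    numInv (Fin.cons a f) =
      (Finset.univ.filter (fun i : Fin n => f i < a)).card + numInv f := by
  rw [numInv, numInv, Finset.card_filter, Finset.card_filter, Finset.card_filter,
    ← Finset.univ_product_univ, Finset.sum_product, Fin.sum_univ_succ]
  simp only [Fin.sum_univ_succ, Fin.cons_zero, Fin.cons_succ, Fin.not_lt_zero,
    Fin.succ_pos, Fin.succ_lt_succ_iff, false_and, if_false, true_and, lt_irrefl,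
    Finset.sum_const_zero, zero_add, add_zero]
  rw [← Finset.univ_product_univ, Finset.sum_product]


lemma card_filter_get {α : Type*} [LinearOrder α] (l : List α) (x : α) :
    (Finset.univ.filter (fun i : Fin l.length => l.get i < x)).card =
      l.countP (fun y => y < x) := by
  rw [Finset.card_filter]
  have h1 : ∀ i : Fin l.length, (if l.get i < x then 1 else 0) =
      (fun y => if y < x then 1 else 0) l[(i : ℕ)] := by
    intro i; simp [List.get_eq_getElem]
  rw [Finset.sum_congr rfl (fun i _ => h1 i),
    Fin.sum_univ_fun_getElem l (fun y => if y < x then 1 else 0)]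
  induction l with
  | nil => simp
  | cons a l ih => simp [List.countP_cons, ih, add_comm]

lemma listInv_cons {α : Type*} [LinearOrder α] (x : α) (l : List α) :
    listInv (x :: l) = l.countP (fun y => y < x) + listInv l := by
  have h : (x :: l).get = Fin.cons x l.get := by
    funext i
    refine Fin.cases ?_ ?_ i <;> simp
  rw [listInv, h, numInv_cons, card_filter_get, listInv]

/-- Inserting a new element `x` (which, being inserted in reverse order, logically
precedes every element already in the structure) into the block `L_j`, where `j` is
the least index whose block has maximum `≥ x` (or the last index if no such block
exists), adds exactly `∑_{i<j} |L_i|` inversions plus the inversions of `x`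
within `L_j`, which equal `|{y ∈ L_j : y < x}|`. -/
theorem insert_into_block_inversions {α : Type*} [LinearOrder α]
    (L : List (List α)) (hne : ∀ i : Fin L.length, L.get i ≠ [])
    (hord : L.Pairwise (fun A B => ∀ a ∈ A, ∀ b ∈ B, a ≤ b))
    (x : α) (j : Fin L.length)
    (hj : (∃ y ∈ L.get j, x ≤ y) ∨ (j : ℕ) = L.length - 1)
    (hj_least : ∀ i : Fin L.length, i < j → ∀ y ∈ L.get i, y < x)
    (hj_after : ∀ i : Fin L.length, j < i → ∀ y ∈ L.get i, x ≤ y) :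
    listInv (x :: L.flatten) =
      listInv L.flatten +
        (∑ i ∈ Finset.univ.filter (fun i : Fin L.length => i < j), (L.get i).length) +
        (L.get j).countP (fun y => y < x) := by
  rw [listInv_cons]
  have hcount : L.flatten.countP (fun y => y < x) =
      ∑ i : Fin L.length, (L.get i).countP (fun y => y < x) := by
    rw [List.countP_flatten,
      ← Fin.sum_univ_fun_getElem L (fun A => A.countP (fun y => y < x))]
    simp [List.get_eq_getElem]
  have hsplit : (Finset.univ : Finset (Fin L.length)) =
      (Finset.univ.filter (fun i => i < j)) ∪
        insert j (Finset.univ.filter (fun i => j < i)) := by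
    ext i
    simp only [Finset.mem_union, Finset.mem_insert, Finset.mem_filter,
      Finset.mem_univ, true_and, true_iff]
    rcases lt_trichotomy i j with h | h | h
    · exact Or.inl h
    · exact Or.inr (Or.inl h)
    · exact Or.inr (Or.inr h)
  have hdisj : Disjoint (Finset.univ.filter (fun i : Fin L.length => i < j))
      (insert j (Finset.univ.filter (fun i => j < i))) := by
    simp only [Finset.disjoint_insert_right, Finset.disjoint_filter_filter']
    constructor
    · simp
    · rw [Finset.disjoint_filter]
      intro i _ h1 h2
      exact absurd (h1.trans h2) (lt_irrefl i)
  rw [hcount,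
    show (∑ i : Fin L.length, (L.get i).countP (fun y => y < x)) =
      ∑ i ∈ (Finset.univ.filter (fun i => i < j)) ∪
        insert j (Finset.univ.filter (fun i => j < i)),
        (L.get i).countP (fun y => y < x) from
      Finset.sum_congr hsplit fun _ _ => rfl,
    Finset.sum_union hdisj, Finset.sum_insert (by simp)]
  have h1 : ∑ i ∈ Finset.univ.filter (fun i : Fin L.length => i < j),
      (L.get i).countP (fun y => y < x) =
      ∑ i ∈ Finset.univ.filter (fun i : Fin L.length => i < j), (L.get i).length := by
    refine Finset.sum_congr rfl fun i hi => ?_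
    rw [List.countP_eq_length]
    intro a ha
    simp only [decide_eq_true_eq]
    exact hj_least i (Finset.mem_filter.mp hi).2 a ha
  have h2 : ∑ i ∈ Finset.univ.filter (fun i : Fin L.length => j < i),
      (L.get i).countP (fun y => y < x) = 0 := by
    refine Finset.sum_eq_zero fun i hi => ?_
    rw [List.countP_eq_zero]
    intro a ha
    simp only [decide_eq_true_eq, not_lt]
    exact hj_after i (Finset.mem_filter.mp hi).2 a ha
  rw [h1, h2]
  omega
end
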